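/- With the setup of an exponential family with log-partition function T and mean map μ = ∇T(θ), for any density p with E_p[φ(x)] = μ = ∇T(θ) and any alternative θ̂ with μ̂ = ∇T(θ̂), we have E_p[log p(x; μ)] - E_p[log p(x; μ̂)] = T(θ̂) - T(θ) - ⟨θ̂ - θ, ∇T(θ)⟩ ≥ 0, with strict inequality when μ̂ ≠ μ. Hence the generalized logarithmic scoring rule S(μ, x) = log p(x; μ) is proper for the statistic φ. -/

import Mathlib

open RealInnerProductSpace MeasureTheory

private lemma bregman_aux {d : ℕ} {Θ : Set (EuclideanSpace ℝ (Fin d))}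
    (T : EuclideanSpace ℝ (Fin d) → ℝ) (g : EuclideanSpace ℝ (Fin d))
    (hconv : ConvexOn ℝ Θ T)
    {θ θhat : EuclideanSpace ℝ (Fin d)} (hθ : θ ∈ Θ) (hθhat : θhat ∈ Θ)
    (hg : HasGradientAt T g θ) :
    ⟪g, θhat - θ⟫ ≤ T θhat - T θ := by
  set v := θhat - θ with hv
  have hline : ∀ t : ℝ, θ + t • v = (1 - t) • θ + t • θhat := by
    intro t
    simp [hv, smul_sub, sub_smul]
    abel
  -- g has derivative ⟪g, v⟫ along the line at 0
  have hd : HasDerivAt (fun t : ℝ => T (θ + t • v)) ⟪g, v⟫ 0 := by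
    have h1 : HasDerivAt (fun t : ℝ => θ + t • v) v 0 := by
      simpa using ((hasDerivAt_id (0:ℝ)).smul_const v).const_add θ
    have hg' : HasFDerivAt T ((InnerProductSpace.toDual ℝ _) g) (θ + (0:ℝ) • v) := by
      simp only [zero_smul, add_zero]; exact hg.hasFDerivAt
    have h2 := hg'.comp_hasDerivAt 0 h1
    exact h2
  have hslope : ∀ t ∈ Set.Ioo (0:ℝ) 1,
      slope (fun t : ℝ => T (θ + t • v)) 0 t ≤ T θhat - T θ := by
    intro t ht
    have hmem : T ((1 - t) • θ + t • θhat) ≤ (1 - t) * T θ + t * T θhat :=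
      hconv.2 hθ hθhat (by linarith [ht.2]) (le_of_lt ht.1) (by ring)
    rw [slope_def_field]
    rw [hline t]
    have ht' : (0:ℝ) < t := ht.1
    simp only [sub_zero]
    rw [div_le_iff₀ ht']
    · calc T ((1 - t) • θ + t • θhat) - T (θ + (0:ℝ) • v)
          ≤ (1 - t) * T θ + t * T θhat - T θ := by
            simpa using sub_le_sub_right hmem (T (θ + (0:ℝ) • v))
        _ = (T θhat - T θ) * t := by ring
  have htend : Filter.Tendsto (slope (fun t : ℝ => T (θ + t • v)) 0)
      (nhdsWithin 0 (Set.Ioi 0)) (nhds ⟪g, v⟫) :=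
    (hasDerivAt_iff_tendsto_slope.mp hd).mono_left
      (nhdsWithin_mono _ (fun x hx => ne_of_gt hx))
  refine le_of_tendsto htend ?_
  filter_upwards [Ioo_mem_nhdsGT_of_mem (Set.left_mem_Ico.2 one_pos)] with t ht
  exact hslope t ht

/-- Properness of the generalized log scoring rule. For an exponential family
with strictly convex log-partition function `T` with injective gradient map
`∇T`, and any density `p` w.r.t. `ν` with statistic mean `μ = ∇T θ`, the
difference in expected log score between reporting `μ` (natural parameter `θ`)
and `μ̂ = ∇T θ̂` equals the Bregman divergence
`T θ̂ - T θ - ⟪θ̂ - θ, ∇T θ⟫ ≥ 0`, strictly positive when `μ̂ ≠ μ`. -/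
theorem generalized_log_score_proper
    {d : ℕ} {X : Type*} [MeasurableSpace X] (ν : Measure X) [SigmaFinite ν]
    (φ : X → EuclideanSpace ℝ (Fin d))
    {Θ : Set (EuclideanSpace ℝ (Fin d))} (hΘ : IsOpen Θ) (hΘc : Convex ℝ Θ)
    (T : EuclideanSpace ℝ (Fin d) → ℝ)
    (gradT : EuclideanSpace ℝ (Fin d) → EuclideanSpace ℝ (Fin d))
    (hTconv : StrictConvexOn ℝ Θ T)
    (hgrad : ∀ θ ∈ Θ, HasGradientAt T (gradT θ) θ)
    (hinj : Set.InjOn gradT Θ)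
    (θ θhat : EuclideanSpace ℝ (Fin d)) (hθ : θ ∈ Θ) (hθhat : θhat ∈ Θ)
    (μ μhat : EuclideanSpace ℝ (Fin d))
    (hμ : μ = gradT θ) (hμhat : μhat = gradT θhat)
    (p : X → ℝ) (hpos : ∀ x, 0 ≤ p x) (hprob : ∫ x, p x ∂ν = 1)
    (hint : Integrable p ν)
    (hintφ : Integrable (fun x => p x • φ x) ν)
    (hmean : ∫ x, p x • φ x ∂ν = μ) :
    (∫ x, p x * (⟪θ, φ x⟫ - T θ) ∂ν) - (∫ x, p x * (⟪θhat, φ x⟫ - T θhat) ∂ν)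
        = T θhat - T θ - ⟪θhat - θ, gradT θ⟫
      ∧ 0 ≤ T θhat - T θ - ⟪θhat - θ, gradT θ⟫
      ∧ (μhat ≠ μ → 0 < T θhat - T θ - ⟪θhat - θ, gradT θ⟫) := by
  have key : ∀ η ∈ Θ, ∫ x, p x * (⟪η, φ x⟫ - T η) ∂ν = ⟪η, μ⟫ - T η := by
    intro η _
    have h1 : ∀ x, p x * (⟪η, φ x⟫ - T η) = ⟪η, p x • φ x⟫ - p x * T η := by
      intro x
      rw [real_inner_smul_right]; ring
    have hi1 : Integrable (fun x => ⟪η, p x • φ x⟫) ν :=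
      (innerSL ℝ η).integrable_comp hintφ
    have hi2 : Integrable (fun x => p x * T η) ν := hint.mul_const _
    calc ∫ x, p x * (⟪η, φ x⟫ - T η) ∂ν
        = ∫ x, (⟪η, p x • φ x⟫ - p x * T η) ∂ν := by
          exact integral_congr_ae (Filter.Eventually.of_forall h1)
      _ = (∫ x, ⟪η, p x • φ x⟫ ∂ν) - ∫ x, p x * T η ∂ν :=
          integral_sub hi1 hi2
      _ = ⟪η, ∫ x, p x • φ x ∂ν⟫ - (∫ x, p x ∂ν) * T η := by
          rw [integral_inner hintφ, integral_mul_const]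
      _ = ⟪η, μ⟫ - T η := by rw [hmean, hprob, one_mul]
  have hrw : ⟪θhat - θ, gradT θ⟫ = ⟪gradT θ, θhat - θ⟫ := real_inner_comm _ _
  have hle : ⟪gradT θ, θhat - θ⟫ ≤ T θhat - T θ :=
    bregman_aux T (gradT θ) hTconv.convexOn hθ hθhat (hgrad θ hθ)
  refine ⟨?_, by linarith [hle, hrw.le, hrw.ge], ?_⟩
  · rw [key θ hθ, key θhat hθhat, hμ, inner_sub_left]
    ring
  · intro hne
    have hθne : θhat ≠ θ := fun h => hne (by rw [hμhat, hμ, h])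
    -- use midpoint
    set m := (1/2 : ℝ) • θ + (1/2 : ℝ) • θhat with hm
    have hmΘ : m ∈ Θ := hΘc hθ hθhat (by norm_num) (by norm_num) (by norm_num)
    have hstrict : T m < (1/2) * T θ + (1/2) * T θhat :=
      hTconv.2 hθ hθhat (Ne.symm hθne) (by norm_num) (by norm_num) (by norm_num)
    have hle2 : ⟪gradT θ, m - θ⟫ ≤ T m - T θ :=
      bregman_aux T (gradT θ) hTconv.convexOn hθ hmΘ (hgrad θ hθ)
    have hmsub : m - θ = (1/2 : ℝ) • (θhat - θ) := by
      rw [hm]; module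
    rw [hmsub, real_inner_smul_right] at hle2
    rw [hrw]
    linarith
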